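/- The cut-rank function of a finite simple graph is submodular: for all subsets A, B of vertices, cutrk(A ∪ B) + cutrk(A ∩ B) ≤ cutrk(A) + cutrk(B). -/

import Mathlib

open scoped Classical

/-- The cut-rank of a set `A` of vertices of a finite simple graph `G`:
the `F₂`-rank of the bipartite adjacency matrix between `A` and its complement. -/
noncomputable def cutrk {V : Type*} [Fintype V] [DecidableEq V]
    (G : SimpleGraph V) (A : Finset V) : ℕ :=
  Matrix.rank (fun (a : ↥A) (b : ↥(Aᶜ)) => if G.Adj a.1 b.1 then (1 : ZMod 2) else 0)

section Aux

variable {V : Type*} [Fintype V] [DecidableEq V] (G : SimpleGraph V)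

open Module Submodule LinearMap

/-- column of the adjacency matrix over F2 -/
noncomputable def colF (b : V) : V → ZMod 2 := fun v => if G.Adj v b then 1 else 0

/-- span of columns indexed by the complement of `A` -/
noncomputable def Wsp (A : Finset V) : Submodule (ZMod 2) (V → ZMod 2) :=
  Submodule.span (ZMod 2) (colF G '' ((Aᶜ : Finset V) : Set V))

/-- restriction to coordinates in `A` -/
noncomputable def resL (A : Finset V) : (V → ZMod 2) →ₗ[ZMod 2] (↥A → ZMod 2) :=
  LinearMap.funLeft (ZMod 2) (ZMod 2) (fun a : ↥A => (a : V))

lemma mem_ker_resL (A : Finset V) (f : V → ZMod 2) :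
    f ∈ LinearMap.ker (resL (V := V) A) ↔ ∀ x ∈ A, f x = 0 := by
  simp [resL, LinearMap.mem_ker, funext_iff, LinearMap.funLeft_apply, Subtype.forall]

lemma cutrk_eq (A : Finset V) :
    cutrk G A = finrank (ZMod 2) ((Wsp G A).map (resL (V := V) A)) := by
  rw [cutrk]; erw [Matrix.rank_eq_finrank_span_cols]; rw [Wsp, Submodule.map_span, ← Set.image_comp]
  have h : Set.range (Matrix.transpose fun (a : ↥A) (b : ↥(Aᶜ)) => if G.Adj a.1 b.1 then (1 : ZMod 2) else 0)
      = (⇑(resL (V := V) A) ∘ colF G) '' ((Aᶜ : Finset V) : Set V) := by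
    ext g
    simp only [Set.mem_range, Set.mem_image, Function.comp]
    constructor
    · rintro ⟨b, hb⟩
      exact ⟨b.1, b.2, by rw [← hb]; rfl⟩
    · rintro ⟨b, hb, hbg⟩
      exact ⟨⟨b, by simpa using hb⟩, by rw [← hbg]; rfl⟩
  erw [h]

lemma rank_nullity (A : Finset V) (W : Submodule (ZMod 2) (V → ZMod 2)) :
    finrank (ZMod 2) (W.map (resL (V := V) A))
      + finrank (ZMod 2) ((LinearMap.ker (resL (V := V) A) ⊓ W : Submodule (ZMod 2) _))
      = finrank (ZMod 2) W := by
  have h := LinearMap.finrank_range_add_finrank_ker ((resL (V := V) A).domRestrict W)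
  rw [LinearMap.range_domRestrict, LinearMap.ker_domRestrict] at h
  rw [← h]
  congr 1
  have : (LinearMap.ker (resL (V := V) A)).comap W.subtype
      = (LinearMap.ker (resL (V := V) A) ⊓ W).comap W.subtype := by
    simp [Submodule.comap_inf, Submodule.comap_subtype_self]
  rw [this]
  exact ((Submodule.comapSubtypeEquivOfLe inf_le_right).finrank_eq).symm

end Aux

/-- Submodularity of the cut-rank function. -/
theorem cutrk_submodular {V : Type*} [Fintype V] [DecidableEq V]
    (G : SimpleGraph V) (A B : Finset V) :
    cutrk G (A ∪ B) + cutrk G (A ∩ B) ≤ cutrk G A + cutrk G B := by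
  classical
  open Module Submodule in
  set W1 := Wsp G A with hW1
  set W2 := Wsp G B with hW2
  set Z1 := LinearMap.ker (resL (V := V) A) with hZ1
  set Z2 := LinearMap.ker (resL (V := V) B) with hZ2
  -- Z properties
  have hZu : LinearMap.ker (resL (V := V) (A ∪ B)) = Z1 ⊓ Z2 := by
    ext f
    simp only [Submodule.mem_inf, hZ1, hZ2, mem_ker_resL, Finset.mem_union]
    constructor
    · intro h; exact ⟨fun x hx => h x (Or.inl hx), fun x hx => h x (Or.inr hx)⟩
    · rintro ⟨h1, h2⟩ x hx; cases hx with
      | inl h => exact h1 x h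
      | inr h => exact h2 x h
  have hZs : Z1 ⊔ Z2 ≤ LinearMap.ker (resL (V := V) (A ∩ B)) := by
    apply sup_le <;> intro f hf <;> rw [mem_ker_resL] at hf ⊢ <;>
      intro x hx <;> rw [Finset.mem_inter] at hx
    · exact hf x hx.1
    · exact hf x hx.2
  -- W properties
  have hWu : Wsp G (A ∪ B) ≤ W1 ⊓ W2 := by
    apply le_inf <;> apply Submodule.span_mono <;> apply Set.image_mono <;>
      intro x hx <;> simp only [Finset.coe_compl, Set.mem_compl_iff, Finset.mem_coe,
        Finset.mem_union] at hx ⊢ <;> tauto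
  have hWs : Wsp G (A ∩ B) = W1 ⊔ W2 := by
    rw [hW1, hW2, Wsp, Wsp, Wsp, Finset.compl_inter, Finset.coe_union, Set.image_union,
      Submodule.span_union]
  -- rank–nullity equations for A and B
  have hA : cutrk G A + Module.finrank (ZMod 2) ((Z1 ⊓ W1 : Submodule (ZMod 2) _)) = Module.finrank (ZMod 2) W1 := by
    rw [cutrk_eq]; exact rank_nullity (V := V) A W1
  have hB : cutrk G B + Module.finrank (ZMod 2) ((Z2 ⊓ W2 : Submodule (ZMod 2) _)) = Module.finrank (ZMod 2) W2 := by
    rw [cutrk_eq]; exact rank_nullity (V := V) B W2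
  -- union inequality
  have hU : cutrk G (A ∪ B) + Module.finrank (ZMod 2) ((Z1 ⊓ Z2 ⊓ (W1 ⊓ W2) : Submodule (ZMod 2) _))
      ≤ Module.finrank (ZMod 2) ((W1 ⊓ W2 : Submodule (ZMod 2) _)) := by
    have h1 : cutrk G (A ∪ B)
        ≤ Module.finrank (ZMod 2) (((W1 ⊓ W2).map (resL (V := V) (A ∪ B)))) := by
      rw [cutrk_eq]
      exact Submodule.finrank_mono (Submodule.map_mono hWu)
    have h2 := rank_nullity (V := V) (A ∪ B) (W1 ⊓ W2)
    rw [hZu] at h2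
    omega
  -- intersection inequality
  have hI : cutrk G (A ∩ B) + Module.finrank (ZMod 2) (((Z1 ⊓ W1) ⊔ (Z2 ⊓ W2) : Submodule (ZMod 2) _))
      ≤ Module.finrank (ZMod 2) ((W1 ⊔ W2 : Submodule (ZMod 2) _)) := by
    have h2 := rank_nullity (V := V) (A ∩ B) (Wsp G (A ∩ B))
    rw [← cutrk_eq, hWs] at h2
    have h3 : ((Z1 ⊓ W1) ⊔ (Z2 ⊓ W2) : Submodule (ZMod 2) _)
        ≤ LinearMap.ker (resL (V := V) (A ∩ B)) ⊓ (W1 ⊔ W2) := by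
      apply sup_le
      · exact le_inf (inf_le_left.trans ((le_sup_left).trans hZs))
          (inf_le_right.trans le_sup_left)
      · exact le_inf (inf_le_left.trans ((le_sup_right).trans hZs))
          (inf_le_right.trans le_sup_right)
    have h4 := Submodule.finrank_mono h3
    omega
  -- two modular equalities
  have hm1 := Submodule.finrank_sup_add_finrank_inf_eq W1 W2
  have hm2 := Submodule.finrank_sup_add_finrank_inf_eq (Z1 ⊓ W1) (Z2 ⊓ W2)
  have hle : Module.finrank (ZMod 2) (((Z1 ⊓ W1) ⊓ (Z2 ⊓ W2) : Submodule (ZMod 2) _))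
      ≤ Module.finrank (ZMod 2) ((Z1 ⊓ Z2 ⊓ (W1 ⊓ W2) : Submodule (ZMod 2) _)) := by
    apply Submodule.finrank_mono
    intro x hx
    simp only [Submodule.mem_inf] at hx ⊢
    tauto
  omega
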